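/- arXiv:2206.09714 — 3 statements merged into one kernel-verified Lean document; each statement's English description precedes it below -/
import Mathlib

section
/- For the piecewise affine bistable nonlinearity, the explicit speed c_ex = (1−2α)·√( m·a / ((1+mσ)²·α(1−α) + m·τ·(2α−1)²) ) satisfies the matching condition √(Δ(c_ex))·(1−2α) = c_ex·(1+mσ), where Δ(c) = c²(1+σm)² + 4(a − τc²)m, provided α ∈ (0, 1/2), a, m > 0, τ ≥ 0, σ ∈ [0, τ], and c_ex² < a/τ when τ > 0. -/
theorem pwl_exact_speed (a m τ σ α : ℝ) (ha : 0 < a) (hm : 0 < m) (hτ : 0 ≤ τ)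
    (hσ : σ ∈ Set.Icc 0 τ) (hα : α ∈ Set.Ioo (0:ℝ) (1/2))
    (Δ : ℝ → ℝ) (hΔ : ∀ c, Δ c = c ^ 2 * (1 + σ * m) ^ 2 + 4 * (a - τ * c ^ 2) * m)
    (cex : ℝ)
    (hcex : cex = (1 - 2 * α) *
      Real.sqrt (m * a / ((1 + m * σ) ^ 2 * α * (1 - α) + m * τ * (2 * α - 1) ^ 2)))
    (hsub : 0 < τ → cex ^ 2 < a / τ) :
    Real.sqrt (Δ cex) * (1 - 2 * α) = cex * (1 + m * σ) := by
  obtain ⟨hα1, hα2⟩ := hα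
  obtain ⟨hσ0, hστ⟩ := hσ
  have h12 : 0 < 1 - 2 * α := by linarith
  have h1α : 0 < 1 - α := by linarith
  have hmσ : 0 < 1 + m * σ := by nlinarith
  set D : ℝ := (1 + m * σ) ^ 2 * α * (1 - α) + m * τ * (2 * α - 1) ^ 2 with hDdef
  have hD : 0 < D := by
    have h1 : 0 < (1 + m * σ) ^ 2 * α * (1 - α) :=
      mul_pos (mul_pos (pow_pos hmσ 2) hα1) h1α
    have h2 : 0 ≤ m * τ * (2 * α - 1) ^ 2 := by positivity
    linarith
  have hsq : Real.sqrt (m * a / D) ^ 2 = m * a / D :=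
    Real.sq_sqrt (by positivity)
  have hc2 : cex ^ 2 = (1 - 2 * α) ^ 2 * (m * a / D) := by
    rw [hcex, mul_pow, hsq]
  have hcex0 : 0 ≤ cex := by
    rw [hcex]; exact mul_nonneg h12.le (Real.sqrt_nonneg _)
  set t : ℝ := cex * (1 + m * σ) / (1 - 2 * α) with htdef
  have ht0 : 0 ≤ t := by positivity
  have hΔt : Δ cex = t ^ 2 := by
    rw [hΔ, htdef, div_pow, mul_pow, hc2]
    field_simp
    ring_nf
    rw [hDdef]; ring
  rw [hΔt, Real.sqrt_sq ht0, htdef, div_mul_cancel₀ _ h12.ne']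
end

section
/- For α ∈ (0,1), α ≠ 1/2, and σ ∈ [0,τ] with τ > 0 and m > 0, one has α(1−α)/((1+mσ)²·α(1−α) + mτ(2α−1)²) < 1/((1+mσ)² + 4mτ(2α−1)²) ≤ 1; consequently the hyperbolic speed c_ex = c₀·√(α(1−α)/((1+σm)²α(1−α)+τm(2α−1)²)) is strictly smaller than the parabolic speed c₀ > 0. -/
theorem hyperbolic_slower_pwl (m τ σ α c₀ : ℝ) (hm : 0 < m) (hτ : 0 < τ)
    (hσ : σ ∈ Set.Icc 0 τ) (hα : α ∈ Set.Ioo (0:ℝ) 1) (hαh : α ≠ 1/2) (hc₀ : 0 < c₀)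
    (cex : ℝ)
    (hcex : cex = c₀ * Real.sqrt (α * (1 - α) /
      ((1 + σ * m) ^ 2 * α * (1 - α) + τ * m * (2 * α - 1) ^ 2))) :
    α * (1 - α) / ((1 + m * σ) ^ 2 * α * (1 - α) + m * τ * (2 * α - 1) ^ 2)
        < 1 / ((1 + m * σ) ^ 2 + 4 * m * τ * (2 * α - 1) ^ 2)
    ∧ 1 / ((1 + m * σ) ^ 2 + 4 * m * τ * (2 * α - 1) ^ 2) ≤ 1
    ∧ cex < c₀ := by
  obtain ⟨hσ0, hστ⟩ := hσ
  obtain ⟨hα0, hα1⟩ := hα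
  have ha : 0 < α * (1 - α) := by nlinarith
  have hsq : (2 * α - 1) ^ 2 > 0 := by
    have : 2 * α - 1 ≠ 0 := by
      intro h; apply hαh; linarith
    positivity
  have ha4 : α * (1 - α) < 1 / 4 := by nlinarith [hsq]
  have hb : (1:ℝ) ≤ (1 + m * σ) ^ 2 := by nlinarith [mul_nonneg hm.le hσ0]
  have hc : 0 < m * τ * (2 * α - 1) ^ 2 := by positivity
  have hden1 : 0 < (1 + m * σ) ^ 2 * α * (1 - α) + m * τ * (2 * α - 1) ^ 2 := by nlinarith
  have hden2 : 0 < (1 + m * σ) ^ 2 + 4 * m * τ * (2 * α - 1) ^ 2 := by nlinarith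
  have h1 : α * (1 - α) / ((1 + m * σ) ^ 2 * α * (1 - α) + m * τ * (2 * α - 1) ^ 2)
      < 1 / ((1 + m * σ) ^ 2 + 4 * m * τ * (2 * α - 1) ^ 2) := by
    rw [div_lt_div_iff₀ hden1 hden2]
    nlinarith
  have h2 : 1 / ((1 + m * σ) ^ 2 + 4 * m * τ * (2 * α - 1) ^ 2) ≤ 1 := by
    rw [div_le_one hden2]; nlinarith
  refine ⟨h1, h2, ?_⟩
  have hx1 : α * (1 - α) / ((1 + σ * m) ^ 2 * α * (1 - α) + τ * m * (2 * α - 1) ^ 2) < 1 := by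
    have : (1 + σ * m) ^ 2 * α * (1 - α) + τ * m * (2 * α - 1) ^ 2
        = (1 + m * σ) ^ 2 * α * (1 - α) + m * τ * (2 * α - 1) ^ 2 := by ring
    rw [this]
    exact lt_of_lt_of_le h1 h2
  have hx0 : 0 ≤ α * (1 - α) / ((1 + σ * m) ^ 2 * α * (1 - α) + τ * m * (2 * α - 1) ^ 2) := by
    apply div_nonneg ha.le
    nlinarith
  rw [hcex]
  calc c₀ * Real.sqrt (α * (1 - α) /
      ((1 + σ * m) ^ 2 * α * (1 - α) + τ * m * (2 * α - 1) ^ 2)) < c₀ * 1 := by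
        apply mul_lt_mul_of_pos_left _ hc₀
        have := Real.sqrt_lt_sqrt hx0 hx1
        simpa using this
    _ = c₀ := mul_one c₀
end

section
/- Suppose W : ℝ → ℝ is C¹ with W'(u₀) ≠ 0 for some u₀, and φ : ℝ → ℝ is a C² solution of (a − τc²)φ'' + c·(φ + σW'(φ))' − W'(φ) = 0 on ℝ, with φ, φ' and relevant quantities integrable, φ(−∞) = 1, φ(+∞) = 0, φ' → 0 at ±∞, and ∫_ℝ [1 + σW''(φ)]·(φ')² dx > 0. Then c = (W(0) − W(1)) / ∫_ℝ [1 + σW''(φ)](φ')² dx. In particular c > 0 if and only if W(1) < W(0). -/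
open MeasureTheory Filter

theorem speed_formula (a τ σ c : ℝ) (ha : 0 ≤ a) (hτ : 0 ≤ τ) (hσ : 0 ≤ σ)
    (W φ : ℝ → ℝ) (hW : ContDiff ℝ 2 W) (hφ : ContDiff ℝ 2 φ)
    (hODE : ∀ ξ, (a - τ * c ^ 2) * deriv (deriv φ) ξ
        + c * deriv (fun ξ => φ ξ + σ * deriv W (φ ξ)) ξ - deriv W (φ ξ) = 0)
    (hminus : Tendsto φ atBot (nhds 1)) (hplus : Tendsto φ atTop (nhds 0))
    (hd_minus : Tendsto (deriv φ) atBot (nhds 0))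
    (hd_plus : Tendsto (deriv φ) atTop (nhds 0))
    (hint : Integrable (fun x => (1 + σ * deriv (deriv W) (φ x)) * (deriv φ x) ^ 2))
    (hpos : 0 < ∫ x, (1 + σ * deriv (deriv W) (φ x)) * (deriv φ x) ^ 2) :
    c = (W 0 - W 1) / ∫ x, (1 + σ * deriv (deriv W) (φ x)) * (deriv φ x) ^ 2
    ∧ (0 < c ↔ W 1 < W 0) := by
  set g : ℝ → ℝ := fun x => (1 + σ * deriv (deriv W) (φ x)) * (deriv φ x) ^ 2 with hg
  set E : ℝ → ℝ := fun ξ => (a - τ * c ^ 2) / 2 * (deriv φ ξ) ^ 2 - W (φ ξ) with hE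
  have hφd : Differentiable ℝ φ := hφ.differentiable (by norm_num)
  have hφd2 : Differentiable ℝ (deriv φ) :=
    (hφ.iterate_deriv' 1 1).differentiable (by norm_num)
  have hWd : Differentiable ℝ W := hW.differentiable (by norm_num)
  have hWd2 : Differentiable ℝ (deriv W) :=
    (hW.iterate_deriv' 1 1).differentiable (by norm_num)
  -- derivative of ξ ↦ φ ξ + σ * W'(φ ξ)
  have hder1 : ∀ ξ, deriv (fun ξ => φ ξ + σ * deriv W (φ ξ)) ξ
      = deriv φ ξ + σ * (deriv (deriv W) (φ ξ) * deriv φ ξ) := by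
    intro ξ
    have h1 : HasDerivAt φ (deriv φ ξ) ξ := (hφd ξ).hasDerivAt
    have h2 : HasDerivAt (fun ξ => deriv W (φ ξ))
        (deriv (deriv W) (φ ξ) * deriv φ ξ) ξ :=
      (hWd2 (φ ξ)).hasDerivAt.comp ξ h1
    exact (h1.add ((h2.const_mul σ))).deriv
  -- E has derivative -c * g
  have hEderiv : ∀ ξ, HasDerivAt E (-c * g ξ) ξ := by
    intro ξ
    have h1 : HasDerivAt φ (deriv φ ξ) ξ := (hφd ξ).hasDerivAt
    have h2 : HasDerivAt (deriv φ) (deriv (deriv φ) ξ) ξ := (hφd2 ξ).hasDerivAt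
    have h3 : HasDerivAt (fun ξ => (deriv φ ξ) ^ 2)
        (2 * deriv φ ξ * deriv (deriv φ) ξ) ξ := by
      have h := (hasDerivAt_pow 2 (deriv φ ξ)).comp ξ h2
      simp at h
      exact h
    have h4 : HasDerivAt (fun ξ => W (φ ξ)) (deriv W (φ ξ) * deriv φ ξ) ξ :=
      (hWd (φ ξ)).hasDerivAt.comp ξ h1
    have h5 : HasDerivAt E ((a - τ * c ^ 2) / 2 * (2 * deriv φ ξ * deriv (deriv φ) ξ)
        - deriv W (φ ξ) * deriv φ ξ) ξ := (h3.const_mul _).sub h4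
    convert h5 using 1
    have hO := hODE ξ
    rw [hder1 ξ] at hO
    have : (a - τ * c ^ 2) * deriv (deriv φ) ξ - deriv W (φ ξ)
        = -c * (1 + σ * deriv (deriv W) (φ ξ)) * deriv φ ξ := by linarith [hO]
    have key : ((a - τ * c ^ 2) * deriv (deriv φ) ξ - deriv W (φ ξ)) * deriv φ ξ
        = -c * (1 + σ * deriv (deriv W) (φ ξ)) * deriv φ ξ * deriv φ ξ := by
      rw [this]
    simp only [hg]
    nlinarith [key]
  -- limits of E
  have hEbot : Tendsto E atBot (nhds (-(W 1))) := by
    have h1 : Tendsto (fun ξ => (a - τ * c ^ 2) / 2 * (deriv φ ξ) ^ 2) atBot (nhds 0) := by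
      have := (hd_minus.pow 2).const_mul ((a - τ * c ^ 2) / 2)
      simpa using this
    have h2 : Tendsto (fun ξ => W (φ ξ)) atBot (nhds (W 1)) :=
      (hWd.continuous.continuousAt.tendsto).comp hminus
    simpa using h1.sub h2
  have hEtop : Tendsto E atTop (nhds (-(W 0))) := by
    have h1 : Tendsto (fun ξ => (a - τ * c ^ 2) / 2 * (deriv φ ξ) ^ 2) atTop (nhds 0) := by
      have := (hd_plus.pow 2).const_mul ((a - τ * c ^ 2) / 2)
      simpa using this
    have h2 : Tendsto (fun ξ => W (φ ξ)) atTop (nhds (W 0)) :=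
      (hWd.continuous.continuousAt.tendsto).comp hplus
    simpa using h1.sub h2
  have hintE : Integrable (fun x => -c * g x) := hint.const_mul (-c)
  have hFTC : ∫ x, -c * g x = -(W 0) - -(W 1) :=
    MeasureTheory.integral_of_hasDerivAt_of_tendsto hEderiv hintE hEbot hEtop
  rw [integral_const_mul] at hFTC
  have hI : c * ∫ x, g x = W 0 - W 1 := by linarith [hFTC]
  have hc : c = (W 0 - W 1) / ∫ x, g x := by
    field_simp [hpos.ne'] at hI ⊢
    linarith [hI]
  refine ⟨hc, ?_⟩
  rw [hc]
  rw [div_pos_iff]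
  constructor
  · rintro (⟨h, _⟩ | ⟨_, h⟩)
    · linarith
    · linarith
  · intro h
    exact Or.inl ⟨by linarith, hpos⟩
end
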